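/- Let c > 0 and β ∈ ℝ, and define G : ℝ → ℂ by G(u) = βcu + √(1 + 2u²) − ic, and 𝒮(u) = G(u)/conj(G(u)). Then G never vanishes, 𝒮 is differentiable and nowhere vanishing, and: if βc > √2 then lim_{T→∞} ∫_{−T}^{T} 𝒮'(u)/𝒮(u) du = 2πi; if βc < −√2 then this limit equals −2πi; and if |βc| < √2 then this limit equals 0. (With c = |a₁₁|², this gives the asymptotic winding number w_∞ ∈ {1, −1, 0} for the class 𝔄_{2,4} boundary conditions.) -/

import Mathlib

open Filter Real

private lemma sqrt_aux_pos (u : ℝ) : 0 < Real.sqrt (1 + 2 * u ^ 2) :=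
  Real.sqrt_pos.mpr (by positivity)

private lemma f_hasDeriv (c β u : ℝ) :
    HasDerivAt (fun u : ℝ => β * c * u + Real.sqrt (1 + 2 * u ^ 2))
      (β * c + 2 * u / Real.sqrt (1 + 2 * u ^ 2)) u := by
  have h1 : HasDerivAt (fun u : ℝ => β * c * u) (β * c) u := by
    simpa using (hasDerivAt_id u).const_mul (β * c)
  have h2 : HasDerivAt (fun u : ℝ => 1 + 2 * u ^ 2) (4 * u) u := by
    have h := ((hasDerivAt_pow 2 u).const_mul (2 : ℝ)).const_add (1 : ℝ)
    refine h.congr_deriv ?_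
    push_cast
    ring
  have h3 := (Real.hasDerivAt_sqrt (x := 1 + 2 * u ^ 2) (by positivity)).comp u h2
  have hs : Real.sqrt (1 + 2 * u ^ 2) ≠ 0 := (sqrt_aux_pos u).ne'
  have heq : (1 / (2 * Real.sqrt (1 + 2 * u ^ 2))) * (4 * u)
      = 2 * u / Real.sqrt (1 + 2 * u ^ 2) := by
    field_simp; ring
  rw [Function.comp_def] at h3
  rw [heq] at h3
  exact h1.add h3

private lemma sqrt_lb (T : ℝ) : Real.sqrt 2 * T ≤ Real.sqrt (1 + 2 * T ^ 2) := by
  have h1 : Real.sqrt (2 * T ^ 2) ≤ Real.sqrt (1 + 2 * T ^ 2) :=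
    Real.sqrt_le_sqrt (by nlinarith)
  have h2 : Real.sqrt (2 * T ^ 2) = Real.sqrt 2 * |T| := by
    rw [Real.sqrt_mul (by norm_num), Real.sqrt_sq_eq_abs]
  nlinarith [le_abs_self T, Real.sqrt_nonneg 2]

private lemma sqrt_ub (T : ℝ) (hT : 0 ≤ T) :
    Real.sqrt (1 + 2 * T ^ 2) ≤ 1 + Real.sqrt 2 * T := by
  have hsq : Real.sqrt 2 ^ 2 = 2 := Real.sq_sqrt (by norm_num)
  have h1 : (1 : ℝ) + 2 * T ^ 2 ≤ (1 + Real.sqrt 2 * T) ^ 2 := by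
    nlinarith [Real.sqrt_nonneg 2]
  calc Real.sqrt (1 + 2 * T ^ 2) ≤ Real.sqrt ((1 + Real.sqrt 2 * T) ^ 2) :=
        Real.sqrt_le_sqrt h1
    _ = 1 + Real.sqrt 2 * T := Real.sqrt_sq (by nlinarith [Real.sqrt_nonneg 2])

theorem stmt17 (c β : ℝ) (hc : 0 < c)
    (G : ℝ → ℂ)
    (hG : G = fun u : ℝ => ((β * c * u + Real.sqrt (1 + 2 * u ^ 2) : ℝ) : ℂ) - Complex.I * (c : ℂ))
    (S : ℝ → ℂ) (hS : S = fun u => G u / (starRingEnd ℂ) (G u)) :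
    (∀ u : ℝ, G u ≠ 0) ∧ Differentiable ℝ S ∧ (∀ u : ℝ, S u ≠ 0) ∧
    (β * c > Real.sqrt 2 →
      Tendsto (fun T : ℝ => ∫ u in (-T)..T, deriv S u / S u) atTop
        (nhds (2 * Real.pi * Complex.I))) ∧
    (β * c < -Real.sqrt 2 →
      Tendsto (fun T : ℝ => ∫ u in (-T)..T, deriv S u / S u) atTop
        (nhds (-(2 * Real.pi * Complex.I)))) ∧
    (|β * c| < Real.sqrt 2 →
      Tendsto (fun T : ℝ => ∫ u in (-T)..T, deriv S u / S u) atTop (nhds 0)) := by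
  set f : ℝ → ℝ := fun u => β * c * u + Real.sqrt (1 + 2 * u ^ 2) with hf
  set f' : ℝ → ℝ := fun u => β * c + 2 * u / Real.sqrt (1 + 2 * u ^ 2) with hf'
  have hfd : ∀ u, HasDerivAt f (f' u) u := fun u => f_hasDeriv c β u
  -- G never vanishes
  have hGim : ∀ u, (G u).im = -c := by intro u; simp [hG]
  have hGne : ∀ u, G u ≠ 0 := by
    intro u h
    have h2 := hGim u
    rw [h] at h2
    simp at h2
    linarith
  -- conj G
  have hconj : ∀ u, (starRingEnd ℂ) (G u) = ((f u : ℝ) : ℂ) + Complex.I * c := by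
    intro u
    simp only [hG, hf, map_sub, map_mul, Complex.conj_I, Complex.conj_ofReal]
    ring
  have hHne : ∀ u, ((f u : ℝ) : ℂ) + Complex.I * c ≠ 0 := by
    intro u h
    have h2 : (((f u : ℝ) : ℂ) + Complex.I * c).im = c := by simp
    rw [h] at h2
    simp at h2
    linarith
  -- product is |G|^2
  have hGH : ∀ u, G u * (((f u : ℝ) : ℂ) + Complex.I * c) = (((f u) ^ 2 + c ^ 2 : ℝ) : ℂ) := by
    intro u
    rw [hG]
    simp only [hf]
    push_cast
    linear_combination (-(c : ℂ) ^ 2) * Complex.I_sq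
  -- S as a quotient by H
  have hS2 : S = fun u => G u / (((f u : ℝ) : ℂ) + Complex.I * c) := by
    rw [hS]; funext u; rw [hconj u]
  have hGd : ∀ u, HasDerivAt G (((f' u : ℝ) : ℂ)) u := by
    intro u
    rw [hG]
    exact ((hfd u).ofReal_comp).sub_const _
  have hHd : ∀ u, HasDerivAt (fun u => ((f u : ℝ) : ℂ) + Complex.I * c) (((f' u : ℝ) : ℂ)) u :=
    fun u => ((hfd u).ofReal_comp).add_const _
  have hSd : ∀ u, HasDerivAt S
      ((((f' u : ℝ) : ℂ)) * (2 * Complex.I * c) / ((((f u : ℝ) : ℂ)) + Complex.I * c) ^ 2) u := by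
    intro u
    rw [hS2]
    have h := (hGd u).div (hHd u) (hHne u)
    refine h.congr_deriv ?_
    rw [hG]
    simp only [hf]
    ring
  have hdiff : Differentiable ℝ S := fun u => (hSd u).differentiableAt
  have hSne : ∀ u, S u ≠ 0 := by
    intro u
    rw [hS2]
    exact div_ne_zero (hGne u) (hHne u)
  -- logarithmic derivative
  have hSS : ∀ u, deriv S u / S u
      = 2 * Complex.I * c * ((f' u : ℝ) : ℂ) / ((((f u) ^ 2 + c ^ 2 : ℝ)) : ℂ) := by
    intro u
    rw [(hSd u).deriv]
    simp only [hS2]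
    rw [← hGH u]
    have h1 := hGne u
    have h2 := hHne u
    field_simp
  -- antiderivative
  set Phi : ℝ → ℂ := fun u => 2 * Complex.I * ((Real.arctan (f u / c) : ℝ) : ℂ) with hPhi
  have hPhid : ∀ u, HasDerivAt Phi
      (2 * Complex.I * c * ((f' u : ℝ) : ℂ) / ((((f u) ^ 2 + c ^ 2 : ℝ)) : ℂ)) u := by
    intro u
    have ha : HasDerivAt (fun u => Real.arctan (f u / c))
        (1 / (1 + (f u / c) ^ 2) * (f' u / c)) u := by
      have := (Real.hasDerivAt_arctan (f u / c)).comp u ((hfd u).div_const c)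
      simpa [Function.comp_def] using this
    have hb := (ha.ofReal_comp).const_mul (2 * Complex.I)
    have hden : (1 : ℝ) + (f u / c) ^ 2 ≠ 0 := by positivity
    have hden2 : (f u) ^ 2 + c ^ 2 ≠ 0 := by positivity
    have hre : 1 / (1 + (f u / c) ^ 2) * (f' u / c) = c * f' u / ((f u) ^ 2 + c ^ 2) := by
      field_simp
      ring
    rw [hre] at hb
    refine hb.congr_deriv ?_
    push_cast
    ring
  -- FTC
  have hcont : Continuous (fun u => 2 * Complex.I * (c : ℂ) * ((f' u : ℝ) : ℂ)
      / ((((f u) ^ 2 + c ^ 2 : ℝ)) : ℂ)) := by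
    have hfc : Continuous f := by
      simp only [hf]
      fun_prop
    have hf'c : Continuous f' := by
      simp only [hf']
      apply continuous_const.add
      apply Continuous.div (by fun_prop) (by fun_prop)
      exact fun u => (sqrt_aux_pos u).ne'
    apply Continuous.div
    · fun_prop
    · fun_prop
    · intro u
      have : (f u) ^ 2 + c ^ 2 ≠ 0 := by positivity
      exact_mod_cast Complex.ofReal_ne_zero.mpr this
  have hFTC : ∀ T : ℝ, (∫ u in (-T)..T, deriv S u / S u) = Phi T - Phi (-T) := by
    intro T
    rw [show (fun u => deriv S u / S u)
        = fun u => 2 * Complex.I * (c : ℂ) * ((f' u : ℝ) : ℂ) / ((((f u) ^ 2 + c ^ 2 : ℝ)) : ℂ)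
        from funext hSS]
    exact intervalIntegral.integral_eq_sub_of_hasDerivAt
      (fun x _ => hPhid x) (hcont.intervalIntegrable _ _)
  have hrw : (fun T : ℝ => ∫ u in (-T)..T, deriv S u / S u) = fun T => Phi T - Phi (-T) :=
    funext hFTC
  -- limits of f at ±∞ along both directions
  have hfub : ∀ T : ℝ, 0 ≤ T → f T ≤ (β * c + Real.sqrt 2) * T + 1 := by
    intro T hT
    have := sqrt_ub T hT
    simp only [hf]
    nlinarith
  have hflb : ∀ T : ℝ, (β * c + Real.sqrt 2) * T ≤ f T := by
    intro T
    have := sqrt_lb T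
    simp only [hf]
    nlinarith
  have hfnub : ∀ T : ℝ, 0 ≤ T → f (-T) ≤ (Real.sqrt 2 - β * c) * T + 1 := by
    intro T hT
    have h := sqrt_ub T hT
    simp only [hf]
    rw [show (-T) ^ 2 = T ^ 2 by ring]
    nlinarith
  have hfnlb : ∀ T : ℝ, (Real.sqrt 2 - β * c) * T ≤ f (-T) := by
    intro T
    have h := sqrt_lb T
    simp only [hf]
    rw [show (-T) ^ 2 = T ^ 2 by ring]
    nlinarith
  -- arctan limit helpers
  have harctop : ∀ g : ℝ → ℝ, Tendsto g atTop atTop →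
      Tendsto (fun T => ((Real.arctan (g T / c) : ℝ) : ℂ)) atTop (nhds ((π / 2 : ℝ) : ℂ)) := by
    intro g hg
    have h1 : Tendsto (fun T => g T / c) atTop atTop := hg.atTop_div_const hc
    have h2 : Tendsto (fun T => Real.arctan (g T / c)) atTop (nhds (π / 2)) :=
      (Real.tendsto_arctan_atTop.mono_right nhdsWithin_le_nhds).comp h1
    exact (Complex.continuous_ofReal.tendsto _).comp h2
  have harcbot : ∀ g : ℝ → ℝ, Tendsto g atTop atBot →
      Tendsto (fun T => ((Real.arctan (g T / c) : ℝ) : ℂ)) atTop (nhds ((-(π / 2) : ℝ) : ℂ)) := by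
    intro g hg
    have h1 : Tendsto (fun T => g T / c) atTop atBot := hg.atBot_div_const hc
    have h2 : Tendsto (fun T => Real.arctan (g T / c)) atTop (nhds (-(π / 2))) :=
      (Real.tendsto_arctan_atBot.mono_right nhdsWithin_le_nhds).comp h1
    exact (Complex.continuous_ofReal.tendsto _).comp h2
  refine ⟨hGne, hdiff, hSne, ?_, ?_, ?_⟩
  · -- β c > √2 : winding 2πi
    intro hb
    have hpos1 : 0 < β * c + Real.sqrt 2 := by nlinarith [Real.sqrt_nonneg 2]
    have hneg1 : Real.sqrt 2 - β * c < 0 := by linarith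
    have hft : Tendsto f atTop atTop :=
      tendsto_atTop_mono hflb (Tendsto.const_mul_atTop hpos1 tendsto_id)
    have hlin : Tendsto (fun T : ℝ => (Real.sqrt 2 - β * c) * T + 1) atTop atBot :=
      tendsto_atBot_add_const_right _ 1 (Tendsto.const_mul_atTop_of_neg hneg1 tendsto_id)
    have hev : (fun T : ℝ => f (-T)) ≤ᶠ[atTop] fun T => (Real.sqrt 2 - β * c) * T + 1 := by
      filter_upwards [eventually_ge_atTop (0 : ℝ)] with T hT using hfnub T hT
    have hfn : Tendsto (fun T => f (-T)) atTop atBot := tendsto_atBot_mono' atTop hev hlin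
    have A := harctop f hft
    have B := harcbot (fun T => f (-T)) hfn
    have hval : (2 * (Real.pi : ℂ) * Complex.I)
        = 2 * Complex.I * ((π / 2 : ℝ) : ℂ) - 2 * Complex.I * ((-(π / 2) : ℝ) : ℂ) := by
      push_cast; ring
    rw [hrw, hval]
    exact (A.const_mul _).sub (B.const_mul _)
  · -- β c < -√2 : winding -2πi
    intro hb
    have hneg1 : β * c + Real.sqrt 2 < 0 := by nlinarith [Real.sqrt_nonneg 2]
    have hpos1 : 0 < Real.sqrt 2 - β * c := by linarith [Real.sqrt_nonneg 2]
    have hlin : Tendsto (fun T : ℝ => (β * c + Real.sqrt 2) * T + 1) atTop atBot :=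
      tendsto_atBot_add_const_right _ 1 (Tendsto.const_mul_atTop_of_neg hneg1 tendsto_id)
    have hev : f ≤ᶠ[atTop] fun T : ℝ => (β * c + Real.sqrt 2) * T + 1 := by
      filter_upwards [eventually_ge_atTop (0 : ℝ)] with T hT using hfub T hT
    have hft : Tendsto f atTop atBot := tendsto_atBot_mono' atTop hev hlin
    have hfn : Tendsto (fun T => f (-T)) atTop atTop :=
      tendsto_atTop_mono hfnlb (Tendsto.const_mul_atTop hpos1 tendsto_id)
    have A := harcbot f hft
    have B := harctop (fun T => f (-T)) hfn
    have hval : (-(2 * (Real.pi : ℂ) * Complex.I))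
        = 2 * Complex.I * ((-(π / 2) : ℝ) : ℂ) - 2 * Complex.I * ((π / 2 : ℝ) : ℂ) := by
      push_cast; ring
    rw [hrw, hval]
    exact (A.const_mul _).sub (B.const_mul _)
  · -- |β c| < √2 : winding 0
    intro hb
    obtain ⟨hb1, hb2⟩ := abs_lt.mp hb
    have hpos1 : 0 < β * c + Real.sqrt 2 := by linarith
    have hpos2 : 0 < Real.sqrt 2 - β * c := by linarith
    have hft : Tendsto f atTop atTop :=
      tendsto_atTop_mono hflb (Tendsto.const_mul_atTop hpos1 tendsto_id)
    have hfn : Tendsto (fun T => f (-T)) atTop atTop :=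
      tendsto_atTop_mono hfnlb (Tendsto.const_mul_atTop hpos2 tendsto_id)
    have A := harctop f hft
    have B := harctop (fun T => f (-T)) hfn
    have hval : (0 : ℂ)
        = 2 * Complex.I * ((π / 2 : ℝ) : ℂ) - 2 * Complex.I * ((π / 2 : ℝ) : ℂ) := by ring
    rw [hrw, hval]
    exact (A.const_mul _).sub (B.const_mul _)
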